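/- Let g : ℝ → ℝ be continuous with g ≥ r > 0 on [T⁺, ∞), let c > 0, and suppose x₁, x₂ are solutions of ẋ = μ^{2m−1} f(t) − g(t) x^{2n} with x₁(t), x₂(t) ≥ c for all t ≥ T⁺. Then z = x₁ − x₂ satisfies ż = −a(t) z with a(t) ≥ 2 r n c^{2n−1} > 0 for t ≥ T⁺, hence |x₁(t) − x₂(t)| ≤ |x₁(T⁺) − x₂(T⁺)| e^{−2 r n c^{2n−1}(t − T⁺)} → 0 as t → +∞. -/

import Mathlib

open Filter

theorem stmt11 (f g : ℝ → ℝ) (hg : Continuous g) (Tp r c : ℝ) (hr : 0 < r) (hc : 0 < c)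
    (hgb : ∀ t, Tp ≤ t → r ≤ g t)
    (m n : ℕ) (hm : 1 ≤ m) (hn : 1 ≤ n) (μ : ℝ)
    (x₁ x₂ : ℝ → ℝ)
    (h₁ : ∀ t, HasDerivAt x₁ (μ ^ (2 * m - 1) * f t - g t * x₁ t ^ (2 * n)) t)
    (h₂ : ∀ t, HasDerivAt x₂ (μ ^ (2 * m - 1) * f t - g t * x₂ t ^ (2 * n)) t)
    (hb₁ : ∀ t, Tp ≤ t → c ≤ x₁ t) (hb₂ : ∀ t, Tp ≤ t → c ≤ x₂ t) :
    (∃ a : ℝ → ℝ,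
      ∀ t, Tp ≤ t →
        HasDerivAt (fun τ => x₁ τ - x₂ τ) (-(a t) * (x₁ t - x₂ t)) t ∧
        2 * r * n * c ^ (2 * n - 1) ≤ a t) ∧
    (∀ t, Tp ≤ t →
      |x₁ t - x₂ t| ≤ |x₁ Tp - x₂ Tp| * Real.exp (-(2 * r * n * c ^ (2 * n - 1)) * (t - Tp))) ∧
    Tendsto (fun t => x₁ t - x₂ t) atTop (nhds 0) := by
  set K : ℝ := 2 * r * n * c ^ (2 * n - 1) with hKdef
  have hn0 : (0:ℝ) < n := by exact_mod_cast hn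
  have hK : 0 < K := by positivity
  -- the sum factor
  set S : ℝ → ℝ := fun t => ∑ i ∈ Finset.range (2 * n), x₁ t ^ i * x₂ t ^ (2 * n - 1 - i)
    with hSdef
  set a : ℝ → ℝ := fun t => g t * S t with hadef
  set z : ℝ → ℝ := fun t => x₁ t - x₂ t with hzdef
  -- derivative of z
  have hz : ∀ t, Tp ≤ t → HasDerivAt z (-(a t) * z t) t := by
    intro t ht
    have h := (h₁ t).sub (h₂ t)
    have hgeom := geom_sum₂_mul (x₁ t) (x₂ t) (2 * n)
    refine h.congr_deriv (Eq.symm ?_)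
    simp only [hadef, hzdef, hSdef]
    linear_combination (-(g t)) * hgeom
  -- lower bound for a
  have hS : ∀ t, Tp ≤ t → 2 * (n:ℝ) * c ^ (2 * n - 1) ≤ S t := by
    intro t ht
    have : ∀ i ∈ Finset.range (2 * n), c ^ (2 * n - 1) ≤ x₁ t ^ i * x₂ t ^ (2 * n - 1 - i) := by
      intro i hi
      rw [Finset.mem_range] at hi
      have hi' : i ≤ 2 * n - 1 := by omega
      have e : c ^ (2 * n - 1) = c ^ i * c ^ (2 * n - 1 - i) := by
        rw [← pow_add]; congr 1; omega
      rw [e]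
      have hx2 : (0:ℝ) ≤ x₂ t ^ (2 * n - 1 - i) := pow_nonneg (hc.le.trans (hb₂ t ht)) _
      exact mul_le_mul (pow_le_pow_left₀ hc.le (hb₁ t ht) i)
        (pow_le_pow_left₀ hc.le (hb₂ t ht) _) (by positivity) (pow_nonneg (hc.le.trans (hb₁ t ht)) _)
    calc 2 * (n:ℝ) * c ^ (2 * n - 1)
        = (Finset.range (2 * n)).card * c ^ (2 * n - 1) := by
          rw [Finset.card_range]; push_cast; ring
      _ = ∑ _i ∈ Finset.range (2 * n), c ^ (2 * n - 1) := by
          rw [Finset.sum_const, nsmul_eq_mul]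
      _ ≤ S t := Finset.sum_le_sum this
  have hab : ∀ t, Tp ≤ t → K ≤ a t := by
    intro t ht
    have h1 : r ≤ g t := hgb t ht
    have h2 := hS t ht
    have : K = r * (2 * (n:ℝ) * c ^ (2 * n - 1)) := by rw [hKdef]; ring
    rw [this]
    exact mul_le_mul h1 h2 (by positivity) (hr.le.trans h1)
  -- Lyapunov function
  set w : ℝ → ℝ := fun t => z t ^ 2 * Real.exp (2 * K * (t - Tp)) with hwdef
  have hzdiff : ∀ t, HasDerivAt z
      ((μ ^ (2 * m - 1) * f t - g t * x₁ t ^ (2 * n))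
        - (μ ^ (2 * m - 1) * f t - g t * x₂ t ^ (2 * n))) t :=
    fun t => (h₁ t).sub (h₂ t)
  have hw : ∀ t, Tp ≤ t →
      HasDerivAt w (2 * z t ^ 2 * Real.exp (2 * K * (t - Tp)) * (K - a t)) t := by
    intro t ht
    have hz' := hz t ht
    have he : HasDerivAt (fun t => Real.exp (2 * K * (t - Tp)))
        (Real.exp (2 * K * (t - Tp)) * (2 * K)) t := by
      simpa using (((hasDerivAt_id t).sub_const Tp).const_mul (2 * K)).exp
    have := ((hz'.pow 2).mul he)
    refine this.congr_deriv (Eq.symm ?_)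
    push_cast [Pi.pow_apply]
    ring
  have hmono : AntitoneOn w (Set.Ici Tp) := by
    have hdiff : ∀ t ∈ Set.Ici Tp, HasDerivAt w
        (2 * z t ^ 2 * Real.exp (2 * K * (t - Tp)) * (K - a t)) t := fun t ht => hw t ht
    apply antitoneOn_of_deriv_nonpos (convex_Ici Tp)
    · exact fun t ht => ((hw t ht).continuousAt).continuousWithinAt
    · intro t ht
      rw [interior_Ici] at ht
      exact ((hw t ht.le).differentiableAt).differentiableWithinAt
    · intro t ht
      rw [interior_Ici] at ht
      rw [(hw t ht.le).deriv]
      have hKa := hab t ht.le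
      have h1 : K - a t ≤ 0 := by linarith
      have h2 : 0 ≤ 2 * z t ^ 2 * Real.exp (2 * K * (t - Tp)) := by positivity
      exact mul_nonpos_of_nonneg_of_nonpos h2 h1
  -- the decay bound
  have hbd : ∀ t, Tp ≤ t → |z t| ≤ |z Tp| * Real.exp (-K * (t - Tp)) := by
    intro t ht
    have hwle : w t ≤ w Tp := hmono (Set.self_mem_Ici) ht ht
    have hwTp : w Tp = z Tp ^ 2 := by simp [hwdef]
    have hsq : z t ^ 2 ≤ z Tp ^ 2 * Real.exp (-(2 * K) * (t - Tp)) := by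
      have he : (0:ℝ) < Real.exp (2 * K * (t - Tp)) := Real.exp_pos _
      rw [hwTp] at hwle
      rw [hwdef] at hwle
      simp only at hwle
      rw [show -(2*K) * (t - Tp) = -(2 * K * (t - Tp)) by ring, Real.exp_neg,
        ← div_eq_mul_inv, le_div_iff₀ he]
      exact hwle
    have hrhs : (|z Tp| * Real.exp (-K * (t - Tp))) ^ 2
        = z Tp ^ 2 * Real.exp (-(2 * K) * (t - Tp)) := by
      rw [mul_pow, sq_abs, ← Real.exp_nat_mul]
      congr 1
      push_cast
      ring
    have := hsq.trans_eq hrhs.symm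
    have h0 : (0:ℝ) ≤ |z Tp| * Real.exp (-K * (t - Tp)) := by positivity
    calc |z t| = Real.sqrt (z t ^ 2) := (Real.sqrt_sq_eq_abs _).symm
      _ ≤ Real.sqrt ((|z Tp| * Real.exp (-K * (t - Tp))) ^ 2) := Real.sqrt_le_sqrt this
      _ = |z Tp| * Real.exp (-K * (t - Tp)) := by rw [Real.sqrt_sq h0]
  refine ⟨⟨a, fun t ht => ⟨hz t ht, hab t ht⟩⟩, fun t ht => hbd t ht, ?_⟩
  -- tendsto
  have hlim : Tendsto (fun t => |z Tp| * Real.exp (-K * (t - Tp))) atTop (nhds 0) := by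
    have h1 : Tendsto (fun t : ℝ => -K * (t - Tp)) atTop atBot := by
      have h2 : Tendsto (fun t : ℝ => K * (t - Tp)) atTop atTop := by
        apply Tendsto.const_mul_atTop hK
        exact tendsto_atTop_add_const_right _ _ tendsto_id
      have h3 := tendsto_neg_atTop_atBot.comp h2
      have he : (fun t : ℝ => -K * (t - Tp)) = (Neg.neg ∘ fun t : ℝ => K * (t - Tp)) := by
        ext t; simp [Function.comp]
      rw [he]; exact h3
    have := (Real.tendsto_exp_atBot.comp h1).const_mul (|z Tp|)
    simpa using this
  apply squeeze_zero_norm' _ hlim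
  filter_upwards [eventually_ge_atTop Tp] with t ht
  exact hbd t ht
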